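/- Let T > 0, ρ > 0, σP ≥ 0, θ_amb ∈ ℝ, θ_in ∈ ℝ with θ_in ≤ θ_amb, let ε : [0,T] → [0,∞) be continuous, and let θ_high ≥ θ_amb + σP/ρ. Let i : [0,T] → {0,1} and let θ : [0,T] → ℝ be continuous and satisfy θ'(t) = i(t)·σP − ρ(θ(t) − θ_amb) − ε(t)(θ(t) − θ_in) for all t ∈ [0,T] outside a finite set (where θ' denotes the derivative of θ). If θ(0) ∈ [θ_in, θ_high], then θ(t) ∈ [θ_in, θ_high] for all t ∈ [0,T]. -/

import Mathlib

/-- If `f` is continuous on `[a,b]` and has nonpositive derivative on `(a,b)` outside a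
finite set `E`, then `f b ≤ f a`. -/
private lemma le_start_of_deriv_nonpos (E : Finset ℝ) :
    ∀ (a b : ℝ) (f f' : ℝ → ℝ), a ≤ b → ContinuousOn f (Set.Icc a b) →
    (∀ t ∈ Set.Ioo a b, t ∉ E → HasDerivAt f (f' t) t) →
    (∀ t ∈ Set.Ioo a b, t ∉ E → f' t ≤ 0) → f b ≤ f a := by
  classical
  induction E using Finset.induction_on with
  | empty =>
    intro a b f f' hab hc hd hle
    have hanti : AntitoneOn f (Set.Icc a b) := by
      apply antitoneOn_of_deriv_nonpos (convex_Icc a b) hc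
      · intro x hx
        rw [interior_Icc] at hx
        exact ((hd x hx (by simp)).differentiableAt).differentiableWithinAt
      · intro x hx
        rw [interior_Icc] at hx
        rw [(hd x hx (by simp)).deriv]
        exact hle x hx (by simp)
    exact hanti (Set.left_mem_Icc.2 hab) (Set.right_mem_Icc.2 hab) hab
  | @insert c E hcE ih =>
    intro a b f f' hab hc hd hle
    by_cases hcab : c ∈ Set.Ioo a b
    · have h1 : f c ≤ f a := by
        refine ih a c f f' hcab.1.le (hc.mono (Set.Icc_subset_Icc le_rfl hcab.2.le)) ?_ ?_
        · intro t ht htE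
          exact hd t ⟨ht.1, ht.2.trans hcab.2⟩ (by simp [htE, ht.2.ne])
        · intro t ht htE
          exact hle t ⟨ht.1, ht.2.trans hcab.2⟩ (by simp [htE, ht.2.ne])
      have h2 : f b ≤ f c := by
        refine ih c b f f' hcab.2.le (hc.mono (Set.Icc_subset_Icc hcab.1.le le_rfl)) ?_ ?_
        · intro t ht htE
          exact hd t ⟨hcab.1.trans ht.1, ht.2⟩ (by simp [htE, ht.1.ne'])
        · intro t ht htE
          exact hle t ⟨hcab.1.trans ht.1, ht.2⟩ (by simp [htE, ht.1.ne'])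
      exact h2.trans h1
    · refine ih a b f f' hab hc ?_ ?_
      · intro t ht htE
        refine hd t ht ?_
        simp only [Finset.mem_insert]
        rintro (rfl | h)
        exacts [hcab ht, htE h]
      · intro t ht htE
        refine hle t ht ?_
        simp only [Finset.mem_insert]
        rintro (rfl | h)
        exacts [hcab ht, htE h]

/-- Invariance of the temperature interval `[θ_in, θ_high]` for the water
heater ODE `θ' = i·σP − ρ(θ − θ_amb) − ε(t)(θ − θ_in)`, where the mode `i` takes values in
`{0,1}`, the drain rate `ε` is continuous and nonnegative, `θ_in ≤ θ_amb`, and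
`θ_high ≥ θ_amb + σP/ρ`, and the ODE holds outside a finite set of times. -/
theorem temperature_interval_invariant
    (T ρ σP θamb θin θhigh : ℝ) (hT : 0 < T) (hρ : 0 < ρ) (hσP : 0 ≤ σP)
    (hin : θin ≤ θamb) (hhigh : θamb + σP / ρ ≤ θhigh)
    (ε : ℝ → ℝ) (hεc : ContinuousOn ε (Set.Icc 0 T))
    (hεnn : ∀ t ∈ Set.Icc 0 T, 0 ≤ ε t)
    (i : ℝ → ℝ) (hi : ∀ t, i t = 0 ∨ i t = 1)
    (θ : ℝ → ℝ) (hθc : ContinuousOn θ (Set.Icc 0 T))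
    (E : Finset ℝ)
    (hode : ∀ t ∈ Set.Icc 0 T, t ∉ E →
      HasDerivWithinAt θ (i t * σP - ρ * (θ t - θamb) - ε t * (θ t - θin)) (Set.Icc 0 T) t)
    (h0 : θ 0 ∈ Set.Icc θin θhigh) :
    ∀ t ∈ Set.Icc 0 T, θ t ∈ Set.Icc θin θhigh := by
  -- globally continuous extension of the drain rate, shifted by ρ
  set g : ℝ → ℝ := fun s => ρ + Set.IccExtend hT.le ((Set.Icc (0:ℝ) T).restrict ε) s with hgdef
  have hgc : Continuous g := continuous_const.add (hεc.restrict.Icc_extend')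
  have hg : ∀ t ∈ Set.Icc (0:ℝ) T, g t = ρ + ε t := by
    intro t ht
    simp [hgdef, Set.IccExtend_of_mem hT.le _ ht]
    rfl
  -- the primitive of g
  set B : ℝ → ℝ := fun t => ∫ s in (0:ℝ)..t, g s with hBdef
  have hB : ∀ t : ℝ, HasDerivAt B (g t) t := fun t =>
    intervalIntegral.integral_hasDerivAt_right (hgc.intervalIntegrable 0 t)
      hgc.aestronglyMeasurable.stronglyMeasurableAtFilter hgc.continuousAt
  have hBc : Continuous B := continuous_iff_continuousAt.mpr fun t => (hB t).continuousAt
  have hB0 : B 0 = 0 := intervalIntegral.integral_same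
  have hθ' : ∀ t ∈ Set.Ioo 0 T, t ∉ E →
      HasDerivAt θ (i t * σP - ρ * (θ t - θamb) - ε t * (θ t - θin)) t := fun t ht htE =>
    (hode t (Set.Ioo_subset_Icc_self ht) htE).hasDerivAt (Icc_mem_nhds ht.1 ht.2)
  have hσρ : 0 ≤ σP / ρ := div_nonneg hσP hρ.le
  have hθin_high : θin ≤ θhigh := by linarith
  have hiσ : ∀ t, 0 ≤ i t * σP ∧ i t * σP ≤ σP := by
    intro t; rcases hi t with h | h <;> simp [h, hσP]
  have hσρ' : σP ≤ (θhigh - θamb) * ρ := by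
    rw [← div_le_iff₀ hρ]; linarith
  -- upper bound
  have hupper : ∀ t ∈ Set.Icc 0 T, θ t ≤ θhigh := by
    intro t ht
    set u : ℝ → ℝ := fun s => (θ s - θhigh) * Real.exp (B s) with hudef
    set u' : ℝ → ℝ := fun s => (i s * σP - ρ * (θ s - θamb) - ε s * (θ s - θin)) *
      Real.exp (B s) + (θ s - θhigh) * (Real.exp (B s) * g s) with hu'def
    have key : u t ≤ u 0 := by
      refine le_start_of_deriv_nonpos E 0 t u u' ht.1 ?_ ?_ ?_
      · exact (((hθc.mono (Set.Icc_subset_Icc le_rfl ht.2)).sub continuousOn_const).mul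
          ((Real.continuous_exp.comp hBc).continuousOn))
      · intro s hs hsE
        have hs' : s ∈ Set.Ioo 0 T := ⟨hs.1, hs.2.trans_le ht.2⟩
        exact ((hθ' s hs' hsE).sub_const θhigh).mul ((hB s).exp)
      · intro s hs hsE
        have hs' : s ∈ Set.Ioo 0 T := ⟨hs.1, hs.2.trans_le ht.2⟩
        have hsI : s ∈ Set.Icc (0:ℝ) T := Set.Ioo_subset_Icc_self hs'
        have h1 : u' s = Real.exp (B s) *
            (i s * σP - ρ * (θhigh - θamb) - ε s * (θhigh - θin)) := by
          rw [hu'def]; simp only [hg s hsI]; ring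
        have h2 : 0 ≤ ε s * (θhigh - θin) :=
          mul_nonneg (hεnn s hsI) (by linarith)
        have h3 : i s * σP - ρ * (θhigh - θamb) - ε s * (θhigh - θin) ≤ 0 := by
          nlinarith [(hiσ s).2]
        rw [h1]
        exact mul_nonpos_of_nonneg_of_nonpos (Real.exp_pos _).le h3
    have hu0 : u 0 ≤ 0 := by
      simp only [hudef, hB0, Real.exp_zero, mul_one]
      linarith [h0.2]
    have hut : (θ t - θhigh) * Real.exp (B t) ≤ 0 := key.trans hu0
    nlinarith [Real.exp_pos (B t)]
  -- lower bound
  have hlower : ∀ t ∈ Set.Icc 0 T, θin ≤ θ t := by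
    intro t ht
    set v : ℝ → ℝ := fun s => (θin - θ s) * Real.exp (B s) with hvdef
    set v' : ℝ → ℝ := fun s => (-(i s * σP - ρ * (θ s - θamb) - ε s * (θ s - θin))) *
      Real.exp (B s) + (θin - θ s) * (Real.exp (B s) * g s) with hv'def
    have key : v t ≤ v 0 := by
      refine le_start_of_deriv_nonpos E 0 t v v' ht.1 ?_ ?_ ?_
      · exact ((continuousOn_const.sub (hθc.mono (Set.Icc_subset_Icc le_rfl ht.2))).mul
          ((Real.continuous_exp.comp hBc).continuousOn))
      · intro s hs hsE
        have hs' : s ∈ Set.Ioo 0 T := ⟨hs.1, hs.2.trans_le ht.2⟩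
        exact ((hθ' s hs' hsE).const_sub θin).mul ((hB s).exp)
      · intro s hs hsE
        have hs' : s ∈ Set.Ioo 0 T := ⟨hs.1, hs.2.trans_le ht.2⟩
        have hsI : s ∈ Set.Icc (0:ℝ) T := Set.Ioo_subset_Icc_self hs'
        have h1 : v' s = Real.exp (B s) * (-(i s * σP) + ρ * (θin - θamb)) := by
          rw [hv'def]; simp only [hg s hsI]; ring
        have h3 : -(i s * σP) + ρ * (θin - θamb) ≤ 0 := by
          nlinarith [(hiσ s).1]
        rw [h1]
        exact mul_nonpos_of_nonneg_of_nonpos (Real.exp_pos _).le h3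
    have hv0 : v 0 ≤ 0 := by
      simp only [hvdef, hB0, Real.exp_zero, mul_one]
      linarith [h0.1]
    have hvt : (θin - θ t) * Real.exp (B t) ≤ 0 := key.trans hv0
    nlinarith [Real.exp_pos (B t)]
  exact fun t ht => ⟨hlower t ht, hupper t ht⟩
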